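/- arXiv:1601.04355 — 3 statements merged into one kernel-verified Lean document; each statement's English description precedes it below -/
import Mathlib

section
/- Let ρ_ss be a full-rank stationary state of an ergodic Lindblad generator W (so W^{-1} exists on the traceless-w.r.t.-ρ_ss subspace B₀). Define C(X) = X - tr[ρ_ss X]·𝟙 and, for X = (X⁰, X¹, ..., X^k) ∈ M_d(ℂ)^{k+1}, define R(X) = (C(X⁰), X¹, ..., X^k) - L(W^{-1}(C(X⁰))), where L(K) = (W(K), i[L¹,K], ..., i[L^k,K]). Then R is a projection: R² = R. -/
open Matrix
open scoped ComplexOrder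

/-- With `C(X) = X - tr[ρX]𝟙`, `L(K) = (W(K), i[L¹,K],…,i[Lᵏ,K])` and
`R(X) = (C(X⁰), X¹,…,Xᵏ) - L(W⁻¹(C(X⁰)))`, the map `R` is a projection: `R² = R`. -/
theorem stmt3 {d k : ℕ}
    (ρ : Matrix (Fin d) (Fin d) ℂ) (hρ : ρ.PosDef) (htr : ρ.trace = 1)
    (L : Fin k → Matrix (Fin d) (Fin d) ℂ)
    (W : Matrix (Fin d) (Fin d) ℂ →ₗ[ℂ] Matrix (Fin d) (Fin d) ℂ)
    (Winv : Matrix (Fin d) (Fin d) ℂ →ₗ[ℂ] Matrix (Fin d) (Fin d) ℂ)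
    (hW0 : ∀ X, (ρ * W X).trace = 0)
    (hWinv : ∀ X, (ρ * X).trace = 0 → W (Winv X) = X) :
    let C : Matrix (Fin d) (Fin d) ℂ → Matrix (Fin d) (Fin d) ℂ :=
      fun X => X - (ρ * X).trace • (1 : Matrix (Fin d) (Fin d) ℂ)
    let R : Matrix (Fin d) (Fin d) ℂ × (Fin k → Matrix (Fin d) (Fin d) ℂ) →
        Matrix (Fin d) (Fin d) ℂ × (Fin k → Matrix (Fin d) (Fin d) ℂ) :=
      fun X => (C X.1 - W (Winv (C X.1)),
        fun i => X.2 i - Complex.I • (L i * Winv (C X.1) - Winv (C X.1) * L i))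
    ∀ X, R (R X) = R X := by
  intro C R X
  have hC : ∀ Y, (ρ * C Y).trace = 0 := by
    intro Y
    simp only [C, mul_sub, Matrix.mul_smul, mul_one, trace_sub, trace_smul, smul_eq_mul, htr,
      mul_one, sub_self]
  -- first component of R X is zero
  have h1 : C X.1 - W (Winv (C X.1)) = 0 := by
    rw [hWinv _ (hC X.1), sub_self]
  have hC0 : C 0 = 0 := by simp [C]
  have key : C (R X).1 = 0 := by
    show C (C X.1 - W (Winv (C X.1))) = 0
    rw [h1, hC0]
  simp only [R]
  rw [key]
  simp [h1]
end

section
/- With R defined as above (R(X) = (C(X⁰), X¹,...,X^k) - L(W^{-1}(C(X⁰)))), the kernel of R equals {(W(K) + r𝟙, i[L¹,K], ..., i[L^k,K]) : K ∈ M_d(ℂ), r ∈ ℂ} and the range of R equals {(0, Y¹, ..., Y^k) : Y^i ∈ M_d(ℂ)}. -/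
open Matrix
open scoped ComplexOrder

/-- kernel and range of the projection `R`:
`ker R = {(W(K)+r𝟙, i[L¹,K],…,i[Lᵏ,K]) : K, r}` and `ran R = {(0,Y¹,…,Yᵏ)}`. -/
theorem stmt4 {d k : ℕ}
    (ρ : Matrix (Fin d) (Fin d) ℂ) (hρ : ρ.PosDef) (htr : ρ.trace = 1)
    (L : Fin k → Matrix (Fin d) (Fin d) ℂ)
    (W : Matrix (Fin d) (Fin d) ℂ →ₗ[ℂ] Matrix (Fin d) (Fin d) ℂ)
    (Winv : Matrix (Fin d) (Fin d) ℂ →ₗ[ℂ] Matrix (Fin d) (Fin d) ℂ)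
    (hW0 : ∀ X, (ρ * W X).trace = 0)
    (hWinv : ∀ X, (ρ * X).trace = 0 → W (Winv X) = X)
    (hker : ∀ X, W X = 0 ↔ ∃ c : ℂ, X = c • (1 : Matrix (Fin d) (Fin d) ℂ)) :
    let C : Matrix (Fin d) (Fin d) ℂ → Matrix (Fin d) (Fin d) ℂ :=
      fun X => X - (ρ * X).trace • (1 : Matrix (Fin d) (Fin d) ℂ)
    let R : Matrix (Fin d) (Fin d) ℂ × (Fin k → Matrix (Fin d) (Fin d) ℂ) →
        Matrix (Fin d) (Fin d) ℂ × (Fin k → Matrix (Fin d) (Fin d) ℂ) :=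
      fun X => (C X.1 - W (Winv (C X.1)),
        fun i => X.2 i - Complex.I • (L i * Winv (C X.1) - Winv (C X.1) * L i))
    (∀ X, R X = 0 ↔ ∃ (K : Matrix (Fin d) (Fin d) ℂ) (r : ℂ),
        X = (W K + r • (1 : Matrix (Fin d) (Fin d) ℂ),
          fun i => Complex.I • (L i * K - K * L i))) ∧
    (∀ Y : Matrix (Fin d) (Fin d) ℂ × (Fin k → Matrix (Fin d) (Fin d) ℂ),
        (∃ X, R X = Y) ↔ Y.1 = 0) := by
  intro C R
  have hC0 : ∀ X, (ρ * C X).trace = 0 := by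
    intro X
    simp only [C, Matrix.mul_sub, Matrix.mul_smul, mul_one, Matrix.trace_sub,
      Matrix.trace_smul, htr, smul_eq_mul, mul_one, sub_self]
  have hWC : ∀ X, W (Winv (C X)) = C X := fun X => hWinv _ (hC0 X)
  constructor
  · intro X
    constructor
    · intro h
      have h2 : ∀ i, X.2 i - Complex.I • (L i * Winv (C X.1) - Winv (C X.1) * L i) = 0 :=
        fun i => congrFun (congrArg Prod.snd h) i
      refine ⟨Winv (C X.1), (ρ * X.1).trace, ?_⟩
      have hfst : X.1 = W (Winv (C X.1)) + (ρ * X.1).trace • 1 := by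
        rw [hWC]; simp [C]
      refine Prod.ext hfst ?_
      funext i
      exact (sub_eq_zero.mp (h2 i)).symm ▸ rfl
    · rintro ⟨K, r, rfl⟩
      have htrfst : (ρ * (W K + r • (1 : Matrix (Fin d) (Fin d) ℂ))).trace = r := by
        simp [Matrix.mul_add, Matrix.mul_smul, Matrix.trace_add, Matrix.trace_smul,
          hW0 K, htr]
      have hCfst : C (W K + r • (1 : Matrix (Fin d) (Fin d) ℂ)) = W K := by
        simp only [C, htrfst]; abel
      have hWK : W (Winv (W K)) = W K := hWinv _ (hW0 K)
      obtain ⟨c, hc⟩ := (hker (Winv (W K) - K)).mp (by rw [map_sub, hWK, sub_self])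
      have hWsplit : Winv (W K) = K + c • 1 := by
        have := hc; rw [sub_eq_iff_eq_add] at this; rw [this]; abel
      refine Prod.ext ?_ ?_
      · simp only [R, hCfst, hWK, sub_self, Prod.fst_zero]
      · funext i
        simp only [R, hCfst, hWsplit, Matrix.mul_add, Matrix.add_mul,
          Matrix.mul_smul, Matrix.smul_mul, mul_one, one_mul]
        rw [show L i * K + c • L i - (K * L i + c • L i) = L i * K - K * L i by abel]
        simp
  · intro Y
    constructor
    · rintro ⟨X, rfl⟩
      simp only [R, hWC, sub_self]
    · intro hY
      refine ⟨(0, Y.2), ?_⟩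
      have hC0' : C 0 = 0 := by simp [C]
      have hW00 : W (Winv 0) = 0 := hWinv 0 (by simp)
      obtain ⟨c, hc⟩ := (hker (Winv 0)).mp hW00
      refine Prod.ext ?_ ?_
      · simp [R, hC0', hW00, hY]
      · funext i
        simp [R, hC0', hc, Matrix.mul_smul, Matrix.smul_mul, mul_one, one_mul]
end

section
/- Define E_D : M_d(ℂ)_{sa} × M_d(ℂ)^k → M_d(ℂ)_{sa} by E_D(Ḣ, L̇¹, ..., L̇^k) = Ḣ + Im Σ_{i=1}^k L̇^{i*} L^i, where Im A := (A - A*)/(2i). Let D_*(X) for X = (-iK, r) ∈ 𝔤 (K self-adjoint, r ∈ ℝ) be the tangent vector D_*(X) = (i[H,K] + r𝟙, i[L¹,K], ..., i[L^k,K]). Then E_D(D_*(X)) = r𝟙 + W_D(K), where W_D is the Lindblad generator W_D(K) = i[H,K] + Σ_i (L^{i*} K L^i - (1/2)(L^{i*}L^i K + K L^{i*}L^i)). -/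
open Matrix

/-- Matrix "imaginary part" `Im A = (A - A*)/(2i)`. -/
noncomputable def mIm {d : ℕ} (A : Matrix (Fin d) (Fin d) ℂ) : Matrix (Fin d) (Fin d) ℂ :=
  ((2 : ℂ) * Complex.I)⁻¹ • (A - Aᴴ)

/-- The Lindblad generator associated to `(H, L¹, …, Lᵏ)`. -/
noncomputable def lindblad {d k : ℕ} (H : Matrix (Fin d) (Fin d) ℂ)
    (L : Fin k → Matrix (Fin d) (Fin d) ℂ) (X : Matrix (Fin d) (Fin d) ℂ) :
    Matrix (Fin d) (Fin d) ℂ :=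
  Complex.I • (H * X - X * H) +
    ∑ i, ((L i)ᴴ * X * L i -
      (2 : ℂ)⁻¹ • ((L i)ᴴ * L i * X + X * ((L i)ᴴ * L i)))

/-- With `E_D(Ḣ,L̇¹,…,L̇ᵏ) = Ḣ + Im Σ L̇ⁱ* Lⁱ` and
`D_*((-iK,r)) = (i[H,K] + r𝟙, i[L¹,K],…,i[Lᵏ,K])`, one has
`E_D(D_*((-iK,r))) = r𝟙 + W_D(K)`. -/
theorem stmt8 {d k : ℕ}
    (H K : Matrix (Fin d) (Fin d) ℂ) (hH : Hᴴ = H) (hK : Kᴴ = K)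
    (L : Fin k → Matrix (Fin d) (Fin d) ℂ) (r : ℝ) :
    (Complex.I • (H * K - K * H) + (r : ℂ) • (1 : Matrix (Fin d) (Fin d) ℂ)) +
      mIm (∑ i, (Complex.I • (L i * K - K * L i))ᴴ * L i) =
    (r : ℂ) • (1 : Matrix (Fin d) (Fin d) ℂ) + lindblad H L K := by
  have hterm : ∀ i : Fin k,
      ((2 : ℂ) * Complex.I)⁻¹ • ((Complex.I • (L i * K - K * L i))ᴴ * L i
        - ((Complex.I • (L i * K - K * L i))ᴴ * L i)ᴴ)
      = (L i)ᴴ * K * L i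
        - (2 : ℂ)⁻¹ • ((L i)ᴴ * L i * K + K * ((L i)ᴴ * L i)) := by
    intro i
    simp only [Matrix.conjTranspose_smul, Matrix.conjTranspose_sub,
      Matrix.conjTranspose_neg, Matrix.conjTranspose_mul,
      Matrix.conjTranspose_conjTranspose, hK,
      Complex.star_def, Complex.conj_I, neg_smul, Matrix.neg_mul,
      Matrix.mul_neg, smul_neg, neg_neg, sub_mul, mul_sub, smul_sub, smul_smul,
      Matrix.mul_smul, Matrix.smul_mul, Matrix.mul_assoc]
    match_scalars <;> field_simp <;> ring
  rw [mIm, lindblad, Matrix.conjTranspose_sum, ← Finset.sum_sub_distrib,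
    Finset.smul_sum]
  rw [Finset.sum_congr rfl fun i _ => hterm i]
  abel
end
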